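/- Let ‖·‖ be an arbitrary norm on ℝ^d. Let (a_k)_{k≥0} and (b_k)_{k≥0} be sequences in ℝ^d such that: (1) a_k → t for some t ≠ 0; (2) b_k ≠ 0 for all k; (3) b_k/‖b_k‖ → t/‖t‖. Then for all sufficiently large k one has ‖a_k‖ < ‖a_k + b_k‖. -/

import Mathlib

open Real Filter

noncomputable section

/-- `N` is a norm on `ℝ^d = (Fin d → ℝ)`. -/
def IsNormD {d : ℕ} (N : (Fin d → ℝ) → ℝ) : Prop :=
  (∀ u, 0 ≤ N u) ∧ (∀ u, N u = 0 ↔ u = 0) ∧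
  (∀ (r : ℝ) (u : Fin d → ℝ), N (r • u) = |r| * N u) ∧
  (∀ u w : Fin d → ℝ, N (u + w) ≤ N u + N w)

theorem statement17 {d : ℕ}
    (N : (Fin d → ℝ) → ℝ) (hN : IsNormD N)
    (a b : ℕ → Fin d → ℝ) (t : Fin d → ℝ) (ht : t ≠ 0)
    (ha : Tendsto a atTop (nhds t))
    (hb : ∀ k, b k ≠ 0)
    (hdir : Tendsto (fun k => (N (b k))⁻¹ • b k) atTop (nhds ((N t)⁻¹ • t))) :
    ∀ᶠ k in atTop, N (a k) < N (a k + b k) := by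
  obtain ⟨h0, hz, hhom, htri⟩ := hN
  have hN0 : N 0 = 0 := (hz 0).2 rfl
  have hNt : 0 < N t := lt_of_le_of_ne (h0 t) (fun h => ht ((hz t).1 h.symm))
  set c := N t with hc
  have hNneg : ∀ u, N (-u) = N u := by
    intro u
    have := hhom (-1) u
    simpa using this
  -- N of a finite sum
  have hsumN : ∀ (s : Finset (Fin d)) (f : Fin d → Fin d → ℝ),
      N (∑ i ∈ s, f i) ≤ ∑ i ∈ s, N (f i) := by
    intro s f
    induction s using Finset.induction_on with
    | empty => simp [hN0]
    | insert _ _ hnotmem ih =>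
      rw [Finset.sum_insert hnotmem, Finset.sum_insert hnotmem]
      exact le_trans (htri _ _) (by linarith)
  have hle : ∀ v : Fin d → ℝ, N v ≤ ∑ i, |v i| * N (Pi.single i (1:ℝ)) := by
    intro v
    have hv : (∑ i, Pi.single i (v i)) = v := Finset.univ_sum_single v
    calc N v = N (∑ i, Pi.single i (v i)) := by rw [hv]
      _ ≤ ∑ i, N (Pi.single i (v i)) := hsumN _ _
      _ = ∑ i, |v i| * N (Pi.single i 1) := by
          refine Finset.sum_congr rfl fun i _ => ?_
          have : Pi.single i (v i) = (v i) • (Pi.single i (1:ℝ) : Fin d → ℝ) := by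
            ext j
            by_cases h : j = i <;> simp [Pi.single_apply, h]
          rw [this, hhom]
  -- convergence transfers
  have key : ∀ (x : ℕ → Fin d → ℝ) (l : Fin d → ℝ),
      Tendsto x atTop (nhds l) → Tendsto (fun k => N (x k - l)) atTop (nhds 0) := by
    intro x l hx
    have hbound : Tendsto (fun k => ∑ i, |x k i - l i| * N (Pi.single i (1:ℝ)))
        atTop (nhds 0) := by
      have : Tendsto (fun k => ∑ i, |x k i - l i| * N (Pi.single i (1:ℝ)))
          atTop (nhds (∑ i : Fin d, 0)) := by
        apply tendsto_finset_sum
        intro i _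
        have hxi : Tendsto (fun k => x k i) atTop (nhds (l i)) :=
          (tendsto_pi_nhds.1 hx) i
        have : Tendsto (fun k => |x k i - l i|) atTop (nhds |l i - l i|) :=
          ((hxi.sub_const (l i)).abs)
        simpa using this.mul_const (N (Pi.single i (1:ℝ)))
      simpa using this
    exact squeeze_zero (fun k => h0 _) (fun k => hle _) hbound
  -- eventual bounds
  have h1 : Tendsto (fun k => N (a k - t)) atTop (nhds 0) := key a t ha
  have h3 : Tendsto (fun k => N ((N (b k))⁻¹ • b k - (N t)⁻¹ • t)) atTop (nhds 0) :=
    key _ _ hdir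
  have E1 : ∀ᶠ k in atTop, N (a k - t) < c / 4 :=
    h1.eventually_lt_const (by positivity)
  have E3 : ∀ᶠ k in atTop, N ((N (b k))⁻¹ • b k - (N t)⁻¹ • t) < 1 / 4 :=
    h3.eventually_lt_const (by norm_num)
  filter_upwards [E1, E3] with k hk1 hk3
  set s := N (b k) with hsdef
  have hs : 0 < s := lt_of_le_of_ne (h0 _) (fun h => hb k ((hz _).1 h.symm))
  set u : Fin d → ℝ := (N t)⁻¹ • t with hu
  set w : Fin d → ℝ := (N (b k))⁻¹ • b k - u with hw
  have hct : c • u = t := by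
    rw [hu, smul_smul, mul_inv_cancel₀ hNt.ne', one_smul]
  have hsc : 0 < s + c := by linarith
  -- convexity inequality F1
  have hdecomp : (s + c) • a k = s • (a k - t) + c • (a k + s • u) := by
    rw [← hct]; module
  have F1 : (s + c) * N (a k) ≤ s * N (a k - t) + c * N (a k + s • u) := by
    calc (s + c) * N (a k) = |s + c| * N (a k) := by rw [abs_of_pos hsc]
      _ = N ((s + c) • a k) := (hhom _ _).symm
      _ = N (s • (a k - t) + c • (a k + s • u)) := by rw [hdecomp]
      _ ≤ N (s • (a k - t)) + N (c • (a k + s • u)) := htri _ _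
      _ = s * N (a k - t) + c * N (a k + s • u) := by
          rw [hhom, hhom, abs_of_pos hs, abs_of_pos hNt]
  -- reverse triangle F2
  have hb' : a k + b k = (a k + s • u) + s • w := by
    have hsb : s • ((N (b k))⁻¹ • b k) = b k := smul_inv_smul₀ hs.ne' _
    rw [hw, smul_sub, hsb]; abel
  have F2 : N (a k + s • u) - s * N w ≤ N (a k + b k) := by
    have heq : (a k + b k) + (-(s • w)) = a k + s • u := by rw [hb']; abel
    have h := htri (a k + b k) (-(s • w))
    rw [heq, hNneg, hhom, abs_of_pos hs] at h
    linarith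
  -- lower bound on N (a k)
  have F5 : c - N (a k) ≤ N (a k - t) := by
    have h := htri (a k - t) (-(a k)) 
    have heq : (a k - t) + (-(a k)) = -t := by abel
    rw [heq, hNneg, hNneg] at h
    linarith
  -- combine
  have hwlt : N w < 1 / 4 := hk3
  nlinarith [mul_lt_mul_of_pos_left hk1 hs, mul_lt_mul_of_pos_left hwlt (mul_pos hs hNt),
    mul_lt_mul_of_pos_left hk1 hNt, mul_pos hs hNt, h0 w,
    mul_le_mul_of_nonneg_left F2 hNt.le, mul_le_mul_of_nonneg_left F5 hs.le]
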